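/- arXiv:1102.1620 — 2 statements merged into one kernel-verified Lean document; each statement's English description precedes it below -/
import Mathlib

section
/- For ν > 0, λ > 0, w ≥ 0 and t > 0, the convolution identity ∫_0^t u^{ν-1} E_{ν,ν}(-wλ u^ν) E_{ν,1}(-wλ (t-u)^ν) du = (t^ν/ν) E_{ν,ν}(-wλ t^ν) holds. -/
open Real MeasureTheory Filter

noncomputable def ML (a b x : ℝ) : ℝ := ∑' m : ℕ, x ^ m / Real.Gamma (a * m + b)

lemma cont_rpow_const {q : ℝ} (hq : 0 ≤ q) : Continuous fun x : ℝ => x ^ q := by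
  rcases eq_or_lt_of_le hq with h | h
  · simp only [← h, Real.rpow_zero]; exact continuous_const
  · exact continuous_iff_continuousAt.2 fun x => Real.continuousAt_rpow_const x q (Or.inr hq)

lemma Gamma_ratio_le {ν : ℝ} (hν : 0 < ν) (hν1 : ν ≤ 1) {s : ℝ} (hs : 1 ≤ s) :
    Real.Gamma s ≤ Real.Gamma (s + ν) * (s + ν - 1) ^ (-ν) := by
  have h0 : (0:ℝ) < s + ν - 1 := by linarith
  have h1 : (0:ℝ) < s := by linarith
  have h2 : (0:ℝ) < s + ν := by linarith
  have hconv := Real.convexOn_log_Gamma.2 (Set.mem_Ioi.2 h0) (Set.mem_Ioi.2 h2)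
    (le_of_lt hν) (by linarith : (0:ℝ) ≤ 1 - ν) (by ring)
  have hcomb : ν • (s + ν - 1) + (1 - ν) • (s + ν) = s := by
    simp [smul_eq_mul]; ring
  rw [hcomb] at hconv
  simp only [Function.comp_apply, smul_eq_mul] at hconv
  -- Γ(s+ν) = (s+ν-1) * Γ(s+ν-1)
  have hrec : Real.Gamma (s + ν) = (s + ν - 1) * Real.Gamma (s + ν - 1) := by
    have := Real.Gamma_add_one (s := s + ν - 1) h0.ne'
    rw [sub_add_cancel] at this
    exact this
  have hGpos : 0 < Real.Gamma (s + ν - 1) := Real.Gamma_pos_of_pos h0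
  have hGpos2 : 0 < Real.Gamma (s + ν) := Real.Gamma_pos_of_pos h2
  have hGpos1 : 0 < Real.Gamma s := Real.Gamma_pos_of_pos h1
  have hlog : Real.log (Real.Gamma (s + ν - 1)) =
      Real.log (Real.Gamma (s + ν)) - Real.log (s + ν - 1) := by
    rw [hrec, Real.log_mul h0.ne' hGpos.ne']; ring
  rw [hlog] at hconv
  have key : Real.log (Real.Gamma s) ≤
      Real.log (Real.Gamma (s + ν)) - ν * Real.log (s + ν - 1) := by nlinarith [hconv]
  calc Real.Gamma s = Real.exp (Real.log (Real.Gamma s)) := (Real.exp_log hGpos1).symm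
    _ ≤ Real.exp (Real.log (Real.Gamma (s + ν)) - ν * Real.log (s + ν - 1)) :=
        Real.exp_le_exp.2 key
    _ = Real.Gamma (s + ν) * (s + ν - 1) ^ (-ν) := by
        rw [Real.exp_sub, Real.exp_log hGpos2, Real.rpow_def_of_pos h0, mul_comm (Real.log _),
          div_eq_mul_inv, ← Real.exp_neg, neg_mul]

lemma Gamma_ratio_tendsto {ν : ℝ} (hν : 0 < ν) :
    Tendsto (fun s : ℝ => Real.Gamma s / Real.Gamma (s + ν)) atTop (nhds 0) := by
  set ν' : ℝ := min ν 1 with hν'def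
  have hν'0 : 0 < ν' := lt_min hν one_pos
  have hν'1 : ν' ≤ 1 := min_le_right _ _
  have hν'ν : ν' ≤ ν := min_le_left _ _
  have hbound : ∀ᶠ s : ℝ in atTop,
      Real.Gamma s / Real.Gamma (s + ν) ≤ (s + ν' - 1) ^ (-ν') := by
    filter_upwards [eventually_ge_atTop (2:ℝ)] with s hs
    have h1 : (1:ℝ) ≤ s := by linarith
    have hGs : 0 < Real.Gamma s := Real.Gamma_pos_of_pos (by linarith)
    have hGν' : 0 < Real.Gamma (s + ν') := Real.Gamma_pos_of_pos (by linarith)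
    have hGν : 0 < Real.Gamma (s + ν) := Real.Gamma_pos_of_pos (by linarith)
    have hmono : Real.Gamma (s + ν') ≤ Real.Gamma (s + ν) := by
      rcases eq_or_lt_of_le hν'ν with h | h
      · rw [h]
      · exact le_of_lt (Real.Gamma_strictMonoOn_Ici (by simp [Set.mem_Ici]; linarith)
          (by simp [Set.mem_Ici]; linarith) (by linarith))
    calc Real.Gamma s / Real.Gamma (s + ν) ≤ Real.Gamma s / Real.Gamma (s + ν') :=
          div_le_div_of_nonneg_left hGs.le hGν' hmono
      _ ≤ (s + ν' - 1) ^ (-ν') := by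
          rw [div_le_iff₀ hGν']
          rw [mul_comm]
          exact Gamma_ratio_le hν'0 hν'1 h1
  have hlim : Tendsto (fun s : ℝ => (s + ν' - 1) ^ (-ν')) atTop (nhds 0) := by
    have := (tendsto_rpow_neg_atTop hν'0).comp
      (tendsto_atTop_add_const_right atTop (ν' - 1) tendsto_id)
    simpa [Function.comp_def, add_sub_assoc] using this
  have hnn : ∀ᶠ s : ℝ in atTop, 0 ≤ Real.Gamma s / Real.Gamma (s + ν) := by
    filter_upwards [eventually_ge_atTop (1:ℝ)] with s hs
    exact div_nonneg (Real.Gamma_pos_of_pos (by linarith)).le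
      (Real.Gamma_pos_of_pos (by linarith)).le
  exact squeeze_zero' hnn hbound hlim

lemma summable_ml_aux {ν β y : ℝ} (hν : 0 < ν) (hβ : 0 < β) (hy : 0 ≤ y) :
    Summable (fun n : ℕ => (n + 1 : ℝ) * y ^ n / Real.Gamma (ν * n + β)) := by
  rcases eq_or_lt_of_le hy with h | hy
  · apply summable_of_ne_finset_zero (s := {0})
    intro n hn
    have : n ≠ 0 := by simpa using hn
    simp [← h, zero_pow this]
  · apply summable_of_ratio_norm_eventually_le (r := 1/2) (by norm_num)
    have htend : Tendsto (fun n : ℕ => Real.Gamma (ν * n + β) / Real.Gamma (ν * n + β + ν))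
        atTop (nhds 0) := by
      have h1 : Tendsto (fun n : ℕ => ν * n + β) atTop atTop := by
        apply tendsto_atTop_add_const_right
        exact (tendsto_natCast_atTop_atTop).const_mul_atTop hν
      exact (Gamma_ratio_tendsto hν).comp h1
    have hsmall : ∀ᶠ n : ℕ in atTop,
        Real.Gamma (ν * n + β) / Real.Gamma (ν * n + β + ν) < 1 / (4 * y) :=
      htend.eventually_lt_const (by positivity)
    filter_upwards [hsmall, eventually_ge_atTop 1] with n hn hn1
    have hβn : 0 < ν * n + β := by positivity
    have hG1 : 0 < Real.Gamma (ν * n + β) := Real.Gamma_pos_of_pos hβn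
    have hG2 : 0 < Real.Gamma (ν * n + β + ν) := Real.Gamma_pos_of_pos (by positivity)
    have harg : ν * (n + 1 : ℕ) + β = ν * n + β + ν := by push_cast; ring
    rw [harg]
    rw [Real.norm_of_nonneg (by positivity), Real.norm_of_nonneg (by positivity)]
    have h4y : 4 * y * Real.Gamma (ν * n + β) ≤ Real.Gamma (ν * n + β + ν) := by
      have h := hn.le
      rw [div_le_div_iff₀ hG2 (by positivity)] at h
      linarith
    have hyn : (0:ℝ) ≤ y ^ n := by positivity
    have hfac : ((n:ℝ) + 1 + 1) ≤ 2 * ((n:ℝ) + 1) := by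
      have h1 : (0:ℝ) ≤ (n:ℝ) := Nat.cast_nonneg n
      linarith
    push_cast
    rw [mul_div_assoc', div_le_div_iff₀ hG2 hG1]
    calc ((n:ℝ) + 1 + 1) * y ^ (n+1) * Real.Gamma (ν * n + β)
        = ((n:ℝ) + 1 + 1) * ((y * y ^ n) * Real.Gamma (ν * n + β)) := by
          rw [pow_succ]; ring
      _ ≤ (2 * ((n:ℝ) + 1)) * ((y * y ^ n) * Real.Gamma (ν * n + β)) := by
          apply mul_le_mul_of_nonneg_right hfac
          positivity
      _ = ((n:ℝ) + 1) * y ^ n * (2 * (y * Real.Gamma (ν * n + β))) := by ring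
      _ ≤ ((n:ℝ) + 1) * y ^ n * (2 * (Real.Gamma (ν * n + β + ν) / 4)) := by
          apply mul_le_mul_of_nonneg_left _ (by positivity)
          apply mul_le_mul_of_nonneg_left _ (by norm_num)
          rw [le_div_iff₀ (by norm_num : (0:ℝ) < 4)]
          linarith
      _ = 1 / 2 * (((n:ℝ) + 1) * y ^ n) * Real.Gamma (ν * n + β + ν) := by ring

lemma beta_ii {p q t : ℝ} (hp : 0 < p) (hq : 0 ≤ q) :
    IntervalIntegrable (fun u : ℝ => u ^ (p-1) * (t-u) ^ q) volume 0 t := by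
  have h1 : IntervalIntegrable (fun u : ℝ => u ^ (p-1)) volume 0 t :=
    intervalIntegral.intervalIntegrable_rpow' (by linarith)
  have h2 : ContinuousOn (fun u : ℝ => (t-u) ^ q) (Set.uIcc 0 t) :=
    ((cont_rpow_const hq).comp (continuous_const.sub continuous_id)).continuousOn
  exact h1.mul_continuousOn h2

lemma real_beta {p q t : ℝ} (hp : 0 < p) (hq : 0 < q) (ht : 0 < t) :
    ∫ u in (0:ℝ)..t, u ^ (p-1) * (t-u) ^ (q-1)
      = t ^ (p+q-1) * (Real.Gamma p * Real.Gamma q / Real.Gamma (p+q)) := by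
  have hpc : 0 < Complex.re (p : ℂ) := by simpa using hp
  have hqc : 0 < Complex.re (q : ℂ) := by simpa using hq
  have hB := Complex.Gamma_mul_Gamma_eq_betaIntegral hpc hqc
  have hsum : ((p : ℂ) + q) = ((p + q : ℝ) : ℂ) := by push_cast; ring
  have hGne : Complex.Gamma ((p:ℂ) + q) ≠ 0 := by
    rw [hsum, Complex.Gamma_ofReal]
    exact_mod_cast (Real.Gamma_pos_of_pos (by linarith)).ne'
  have hBval : Complex.betaIntegral p q
      = ((Real.Gamma p * Real.Gamma q / Real.Gamma (p+q) : ℝ) : ℂ) := by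
    rw [Complex.ofReal_div, Complex.ofReal_mul, ← Complex.Gamma_ofReal p,
      ← Complex.Gamma_ofReal q, ← Complex.Gamma_ofReal (p+q), ← hsum, eq_div_iff hGne]
    rw [hB]
    ring
  have hscaled := Complex.betaIntegral_scaled (p:ℂ) (q:ℂ) ht
  have hcongr : (∫ x in (0:ℝ)..t, (x : ℂ) ^ ((p:ℂ) - 1) * ((t : ℂ) - x) ^ ((q:ℂ) - 1))
      = ∫ x in (0:ℝ)..t, ((x ^ (p-1) * (t-x) ^ (q-1) : ℝ) : ℂ) := by
    apply intervalIntegral.integral_congr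
    intro x hx
    rw [Set.uIcc_of_le ht.le] at hx
    have hx0 : 0 ≤ x := hx.1
    have hxt : 0 ≤ t - x := by linarith [hx.2]
    show (x:ℂ) ^ ((p:ℂ)-1) * ((t:ℂ)-x) ^ ((q:ℂ)-1) = ((x ^ (p-1) * (t-x) ^ (q-1) : ℝ) : ℂ)
    rw [Complex.ofReal_mul, Complex.ofReal_cpow hx0, Complex.ofReal_cpow hxt]
    push_cast
    ring
  rw [hcongr, intervalIntegral.integral_ofReal, hBval,
    show ((p:ℂ) + q - 1) = (((p + q - 1 : ℝ)) : ℂ) by push_cast; ring,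
    ← Complex.ofReal_cpow ht.le, ← Complex.ofReal_mul] at hscaled
  exact_mod_cast hscaled

lemma summable_ml {ν β y : ℝ} (hν : 0 < ν) (hβ : 0 < β) (hy : 0 ≤ y) :
    Summable (fun n : ℕ => y ^ n / Real.Gamma (ν * n + β)) := by
  refine (summable_ml_aux hν hβ hy).of_nonneg_of_le (fun n => ?_) (fun n => ?_)
  · have hΓ : 0 < Real.Gamma (ν * n + β) := Real.Gamma_pos_of_pos (by positivity)
    positivity
  · have hΓ : 0 < Real.Gamma (ν * n + β) := Real.Gamma_pos_of_pos (by positivity)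
    gcongr
    exact le_mul_of_one_le_left (pow_nonneg hy n) (by linarith [Nat.cast_nonneg (α := ℝ) n])

lemma pow_rpow_eq {c v : ℝ} (hv : 0 ≤ v) (ν : ℝ) (m : ℕ) :
    (c * v ^ ν) ^ m = c ^ m * v ^ (ν * m) := by
  rw [mul_pow, ← Real.rpow_natCast (v ^ ν) m, ← Real.rpow_mul hv]

lemma summable_ml' {ν β c v : ℝ} (hν : 0 < ν) (hβ : 0 < β) (hc : 0 ≤ c) (hv : 0 ≤ v) :
    Summable (fun m : ℕ => c ^ m * v ^ (ν * m) / Real.Gamma (ν * m + β)) :=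
  (summable_ml hν hβ (y := c * v ^ ν) (by positivity)).congr
    (fun m => by rw [pow_rpow_eq hv])

lemma ML_expand {ν β v : ℝ} (hv : 0 ≤ v) (x : ℝ) :
    ML ν β (x * v ^ ν) = ∑' m : ℕ, x ^ m * v ^ (ν * m) / Real.Gamma (ν * m + β) := by
  unfold ML
  exact tsum_congr fun m => by rw [pow_rpow_eq hv]

theorem stmt1 (ν lam w t : ℝ) (hν : 0 < ν) (hlam : 0 < lam) (hw : 0 ≤ w) (ht : 0 < t) :
    ∫ u in (0:ℝ)..t, u ^ (ν - 1) * ML ν ν (-(w * lam) * u ^ ν) * ML ν 1 (-(w * lam) * (t - u) ^ ν)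
      = (t ^ ν / ν) * ML ν ν (-(w * lam) * t ^ ν) := by
  set c : ℝ := w * lam with hcdef
  have hc0 : 0 ≤ c := by positivity
  set x : ℝ := -c with hxdef
  set F : ℕ → ℝ → ℝ := fun n u =>
    ∑ kl ∈ Finset.HasAntidiagonal.antidiagonal n,
      x ^ n * (u ^ (ν * kl.1 + ν - 1) * (t - u) ^ (ν * kl.2)) /
        (Real.Gamma (ν * kl.1 + ν) * Real.Gamma (ν * kl.2 + 1)) with hFdef
  -- pointwise expansion
  have hpoint : ∀ u ∈ Set.Ioc (0:ℝ) t,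
      u ^ (ν - 1) * ML ν ν (x * u ^ ν) * ML ν 1 (x * (t - u) ^ ν) = ∑' n, F n u := by
    intro u hu
    have hu0 : 0 < u := hu.1
    have hut : 0 ≤ t - u := by linarith [hu.2]
    rw [ML_expand hu0.le, ML_expand hut]
    have hf : Summable fun m : ℕ => ‖x ^ m * u ^ (ν * m) / Real.Gamma (ν * m + ν)‖ := by
      refine (summable_ml' hν hν hc0 hu0.le).congr fun m => Eq.symm ?_
      rw [Real.norm_eq_abs, abs_div, abs_mul, abs_pow, hxdef, abs_neg, abs_of_nonneg hc0,
        abs_of_nonneg (Real.rpow_nonneg hu0.le _),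
        abs_of_nonneg (Real.Gamma_pos_of_pos (by positivity)).le]
    have hg : Summable fun m : ℕ => ‖x ^ m * (t - u) ^ (ν * m) / Real.Gamma (ν * m + 1)‖ := by
      refine (summable_ml' hν one_pos hc0 hut).congr fun m => Eq.symm ?_
      rw [Real.norm_eq_abs, abs_div, abs_mul, abs_pow, hxdef, abs_neg, abs_of_nonneg hc0,
        abs_of_nonneg (Real.rpow_nonneg hut _),
        abs_of_nonneg (Real.Gamma_pos_of_pos (by positivity)).le]
    rw [mul_assoc, tsum_mul_tsum_eq_tsum_sum_antidiagonal_of_summable_norm hf hg,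
      ← tsum_mul_left]
    refine tsum_congr fun n => ?_
    rw [hFdef, Finset.mul_sum]
    refine Finset.sum_congr rfl fun kl hkl => ?_
    have hkl' : kl.1 + kl.2 = n := Finset.HasAntidiagonal.mem_antidiagonal.mp hkl
    have h1 : u ^ (ν - 1) * u ^ (ν * kl.1) = u ^ (ν * kl.1 + ν - 1) := by
      rw [← Real.rpow_add hu0]; ring_nf
    have hxn : x ^ kl.1 * x ^ kl.2 = x ^ n := by rw [← pow_add, hkl']
    rw [div_mul_div_comm, mul_div_assoc']
    congr 1
    rw [← hxn, ← h1]; ring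
  -- integrability of the base beta-type functions
  have hterm_int : ∀ i j : ℕ,
      IntegrableOn (fun u : ℝ => u ^ (ν * i + ν - 1) * (t - u) ^ (ν * j))
        (Set.Ioc 0 t) volume := fun i j =>
    (beta_ii (p := ν * i + ν) (q := ν * j) (by positivity) (by positivity)).1
  have hFint : ∀ (a : ℝ) (n : ℕ), IntegrableOn (fun u =>
      ∑ kl ∈ Finset.HasAntidiagonal.antidiagonal n,
        a ^ n * (u ^ (ν * kl.1 + ν - 1) * (t - u) ^ (ν * kl.2)) /
          (Real.Gamma (ν * kl.1 + ν) * Real.Gamma (ν * kl.2 + 1))) (Set.Ioc 0 t) volume := by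
    intro a n
    apply MeasureTheory.integrable_finset_sum
    intro kl _
    refine ((hterm_int kl.1 kl.2).const_mul
      (a ^ n / (Real.Gamma (ν * kl.1 + ν) * Real.Gamma (ν * kl.2 + 1)))).congr
      (Filter.Eventually.of_forall fun u => by ring)
  -- beta integral values
  have hbeta : ∀ i j : ℕ, ∫ u in Set.Ioc (0:ℝ) t, u ^ (ν * i + ν - 1) * (t - u) ^ (ν * j)
      = t ^ (ν * (i + j : ℕ) + ν) *
        (Real.Gamma (ν * i + ν) * Real.Gamma (ν * j + 1) /
          Real.Gamma (ν * (i + j : ℕ) + ν + 1)) := by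
    intro i j
    rw [← intervalIntegral.integral_of_le ht.le]
    have h := real_beta (p := ν * i + ν) (q := ν * j + 1) (by positivity) (by positivity) ht
    calc ∫ u in (0:ℝ)..t, u ^ (ν * i + ν - 1) * (t - u) ^ (ν * j)
        = ∫ u in (0:ℝ)..t, u ^ (ν * i + ν - 1) * (t - u) ^ (ν * j + 1 - 1) := by
          apply intervalIntegral.integral_congr; intro v _; norm_num
      _ = t ^ (ν * i + ν + (ν * j + 1) - 1) *
            (Real.Gamma (ν * i + ν) * Real.Gamma (ν * j + 1) /
              Real.Gamma (ν * i + ν + (ν * j + 1))) := h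
      _ = _ := by
          rw [show ν * i + ν + (ν * j + 1) - 1 = ν * (i + j : ℕ) + ν by push_cast; ring,
            show ν * i + ν + (ν * j + 1) = ν * (i + j : ℕ) + ν + 1 by push_cast; ring]
  -- value of the integral of each F-like family
  have key : ∀ (a : ℝ) (n : ℕ), ∫ u in Set.Ioc (0:ℝ) t,
      (∑ kl ∈ Finset.HasAntidiagonal.antidiagonal n,
        a ^ n * (u ^ (ν * kl.1 + ν - 1) * (t - u) ^ (ν * kl.2)) /
          (Real.Gamma (ν * kl.1 + ν) * Real.Gamma (ν * kl.2 + 1)))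
      = (n + 1 : ℝ) * (a ^ n * t ^ (ν * n + ν) / Real.Gamma (ν * n + ν + 1)) := by
    intro a n
    have hterm : ∀ kl ∈ Finset.HasAntidiagonal.antidiagonal n,
        (∫ u in Set.Ioc (0:ℝ) t, a ^ n * (u ^ (ν * kl.1 + ν - 1) * (t - u) ^ (ν * kl.2)) /
          (Real.Gamma (ν * kl.1 + ν) * Real.Gamma (ν * kl.2 + 1)))
        = a ^ n * t ^ (ν * n + ν) / Real.Gamma (ν * n + ν + 1) := by
      intro kl hkl
      have hkl' : kl.1 + kl.2 = n := Finset.HasAntidiagonal.mem_antidiagonal.mp hkl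
      have heq : (fun u : ℝ => a ^ n * (u ^ (ν * kl.1 + ν - 1) * (t - u) ^ (ν * kl.2)) /
          (Real.Gamma (ν * kl.1 + ν) * Real.Gamma (ν * kl.2 + 1)))
          = fun u : ℝ => (a ^ n / (Real.Gamma (ν * kl.1 + ν) * Real.Gamma (ν * kl.2 + 1))) *
            (u ^ (ν * kl.1 + ν - 1) * (t - u) ^ (ν * kl.2)) := funext fun u => by ring
      rw [heq, MeasureTheory.integral_const_mul, hbeta kl.1 kl.2, hkl']
      have hΓ1 : (0:ℝ) < Real.Gamma (ν * kl.1 + ν) := Real.Gamma_pos_of_pos (by positivity)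
      have hΓ2 : (0:ℝ) < Real.Gamma (ν * kl.2 + 1) := Real.Gamma_pos_of_pos (by positivity)
      field_simp
    rw [MeasureTheory.integral_finset_sum]
    swap
    · intro kl _
      refine ((hterm_int kl.1 kl.2).const_mul
        (a ^ n / (Real.Gamma (ν * kl.1 + ν) * Real.Gamma (ν * kl.2 + 1)))).congr
        (Filter.Eventually.of_forall fun u => by ring)
    rw [Finset.sum_congr rfl hterm, Finset.sum_const,
      Finset.Nat.card_antidiagonal, nsmul_eq_mul]
    push_cast
    ring
  -- summability of the bounding series
  have hbsum : Summable (fun n : ℕ =>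
      (n + 1 : ℝ) * (c ^ n * t ^ (ν * n + ν) / Real.Gamma (ν * n + ν + 1))) := by
    have h := summable_ml_aux (β := ν + 1) (y := c * t ^ ν) hν (by linarith) (by positivity)
    refine (h.mul_left (t ^ ν)).congr fun n => ?_
    rw [pow_rpow_eq ht.le, show ν * (n:ℝ) + ν = ν * n + ν by ring, Real.rpow_add ht (ν * n) ν,
      show ν * (n:ℝ) + (ν + 1) = ν * n + ν + 1 by ring]
    ring
  -- norm bound for the integrals
  have hnorm : ∀ n : ℕ, (∫ u in Set.Ioc (0:ℝ) t, ‖F n u‖)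
      ≤ (n + 1 : ℝ) * (c ^ n * t ^ (ν * n + ν) / Real.Gamma (ν * n + ν + 1)) := by
    intro n
    rw [← key c n]
    apply MeasureTheory.setIntegral_mono_on ((hFint x n).norm) (hFint c n) measurableSet_Ioc
    intro u hu
    have hu0 : 0 < u := hu.1
    have hut : 0 ≤ t - u := by linarith [hu.2]
    refine (norm_sum_le _ _).trans ?_
    apply Finset.sum_le_sum
    intro kl _
    have hΓ1 : (0:ℝ) < Real.Gamma (ν * kl.1 + ν) := Real.Gamma_pos_of_pos (by positivity)
    have hΓ2 : (0:ℝ) < Real.Gamma (ν * kl.2 + 1) := Real.Gamma_pos_of_pos (by positivity)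
    rw [Real.norm_eq_abs, abs_div, abs_mul, abs_pow, hxdef, abs_neg, abs_of_nonneg hc0,
      abs_of_nonneg (by positivity : (0:ℝ) ≤ u ^ (ν * kl.1 + ν - 1) * (t - u) ^ (ν * kl.2)),
      abs_of_nonneg (by positivity : (0:ℝ) ≤ Real.Gamma (ν * kl.1 + ν) * Real.Gamma (ν * kl.2 + 1))]
  have hsum_int : Summable fun n : ℕ => ∫ u in Set.Ioc (0:ℝ) t, ‖F n u‖ :=
    hbsum.of_nonneg_of_le
      (fun n => MeasureTheory.integral_nonneg fun u => norm_nonneg _) hnorm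
  -- main computation
  rw [intervalIntegral.integral_of_le ht.le,
    MeasureTheory.setIntegral_congr_fun measurableSet_Ioc hpoint,
    ← MeasureTheory.integral_tsum_of_summable_integral_norm (fun n => hFint x n) hsum_int,
    ML_expand ht.le, ← tsum_mul_left]
  refine tsum_congr fun n => ?_
  rw [key x n]
  have hpos : (0:ℝ) < ν * n + ν := by positivity
  rw [show ν * (n:ℝ) + ν + 1 = (ν * n + ν) + 1 by ring, Real.Gamma_add_one hpos.ne',
    Real.rpow_add ht (ν * n) ν]
  have hΓ : (0:ℝ) < Real.Gamma (ν * n + ν) := Real.Gamma_pos_of_pos hpos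
  field_simp
end

section
/- For λ > 0, ν ∈ (0,1], t > 0, the two expressions for the extinction probability agree: (λ t^ν / ν) ∫_0^∞ e^{-w} E_{ν,ν}(-wλt^ν) dw = 1 - ∫_0^∞ e^{-w} E_{ν,1}(-λ t^ν w) dw. -/
open Filter MeasureTheory Set Finset Topology

section MittagLefflerAux
variable {ν : ℝ}

/-- Log-convexity consequence: `Γ(x+1) ≤ Γ(x+ν) (x+ν)^(1-ν)` for `0 < ν ≤ 1`, `x > 0`. -/
lemma Gamma_add_one_le (hν0 : 0 < ν) (hν1 : ν ≤ 1) {x : ℝ} (hx : 0 < x) :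
    Real.Gamma (x + 1) ≤ Real.Gamma (x + ν) * (x + ν) ^ (1 - ν) := by
  have hxν : 0 < x + ν := by linarith
  have hxν1 : 0 < x + ν + 1 := by linarith
  have hconv := Real.convexOn_log_Gamma.2 (mem_Ioi.mpr hxν) (mem_Ioi.mpr hxν1)
    hν0.le (by linarith : (0:ℝ) ≤ 1 - ν) (by ring)
  have harg : ν • (x + ν) + (1 - ν) • (x + ν + 1) = x + 1 := by
    simp only [smul_eq_mul]; ring
  rw [harg] at hconv
  simp only [Function.comp_apply, smul_eq_mul] at hconv
  have hΓ1 : Real.Gamma (x + ν + 1) = (x + ν) * Real.Gamma (x + ν) :=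
    Real.Gamma_add_one hxν.ne'
  have hΓν : 0 < Real.Gamma (x + ν) := Real.Gamma_pos_of_pos hxν
  have hΓx1 : 0 < Real.Gamma (x + 1) := Real.Gamma_pos_of_pos (by linarith)
  rw [hΓ1, Real.log_mul hxν.ne' hΓν.ne'] at hconv
  have hlog : Real.log (Real.Gamma (x + 1)) ≤
      Real.log (Real.Gamma (x + ν)) + (1 - ν) * Real.log (x + ν) := by linarith
  calc Real.Gamma (x + 1) = Real.exp (Real.log (Real.Gamma (x + 1))) := (Real.exp_log hΓx1).symm
    _ ≤ Real.exp (Real.log (Real.Gamma (x + ν)) + (1 - ν) * Real.log (x + ν)) :=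
        Real.exp_le_exp.mpr hlog
    _ = Real.Gamma (x + ν) * (x + ν) ^ (1 - ν) := by
        rw [Real.exp_add, Real.exp_log hΓν, Real.rpow_def_of_pos hxν, mul_comm (Real.log (x + ν))]

lemma ML_summable (hν0 : 0 < ν) {b : ℝ} (hν1 : ν ≤ 1) (hb : 0 < b) (r : ℝ) :
    Summable (fun m : ℕ => |r| ^ m / Real.Gamma (ν * m + b)) := by
  apply summable_of_ratio_norm_eventually_le (r := 1/2) (by norm_num)
  have h1 : Tendsto (fun m : ℕ => ν * m + b) atTop atTop :=
    tendsto_atTop_add_const_right _ b (Tendsto.const_mul_atTop hν0 tendsto_natCast_atTop_atTop)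
  have h2 : Tendsto (fun m : ℕ => (ν * m + b + ν) ^ ν) atTop atTop :=
    (tendsto_rpow_atTop hν0).comp (tendsto_atTop_add_const_right _ ν h1)
  filter_upwards [h1.eventually_ge_atTop ν, h2.eventually_ge_atTop (4 * (|r| + 1))] with m hm1 hm2
  set x := ν * m + b with hxdef
  have hx : 0 < x := by positivity
  have hxν : 0 < x + ν := by linarith
  have habs : (0:ℝ) ≤ |r| := abs_nonneg r
  have hcast : ν * ((m : ℕ) + 1 : ℕ) + b = x + ν := by push_cast; ring
  have hΓx : 0 < Real.Gamma x := Real.Gamma_pos_of_pos hx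
  have hΓxν : 0 < Real.Gamma (x + ν) := Real.Gamma_pos_of_pos hxν
  set P := (x + ν) ^ (1 - ν) with hPdef
  have hP : 0 < P := Real.rpow_pos_of_pos hxν _
  have hstep : 2 * |r| * P ≤ x := by
    have hsplit : P * (x + ν) ^ ν = x + ν := by
      rw [hPdef, ← Real.rpow_add hxν]; norm_num
    have h4' : P * (4 * (|r| + 1)) ≤ x + ν := by
      calc P * (4 * (|r| + 1)) ≤ P * (x + ν) ^ ν := by
            apply mul_le_mul_of_nonneg_left hm2 hP.le
        _ = x + ν := hsplit
    nlinarith [mul_le_mul_of_nonneg_left h4' habs, hm1, habs, hx, hP]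
  have hGle : x * Real.Gamma x ≤ Real.Gamma (x + ν) * P := by
    have := Gamma_add_one_le hν0 hν1 hx
    rwa [Real.Gamma_add_one hx.ne'] at this
  have hkey : 2 * |r| * Real.Gamma x ≤ Real.Gamma (x + ν) := by
    nlinarith [mul_le_mul_of_nonneg_left hGle (by positivity : (0:ℝ) ≤ 2 * |r|),
      mul_le_mul_of_nonneg_left hstep hΓxν.le, hx, hΓx, hΓxν, habs, hP]
  have hnn1 : (0:ℝ) ≤ |r| ^ (m+1) / Real.Gamma (ν * ((m:ℕ)+1:ℕ) + b) := by
    rw [hcast]; positivity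
  have hnn2 : (0:ℝ) ≤ |r| ^ m / Real.Gamma (ν * m + b) := by positivity
  rw [Real.norm_eq_abs, Real.norm_eq_abs, abs_of_nonneg hnn1, abs_of_nonneg hnn2, hcast]
  rw [show (1:ℝ)/2 * (|r| ^ m / Real.Gamma x) = |r| ^ m / (2 * Real.Gamma x) by ring]
  rw [div_le_div_iff₀ hΓxν (by positivity)]
  calc |r| ^ (m+1) * (2 * Real.Gamma x) = |r| ^ m * (2 * |r| * Real.Gamma x) := by ring
    _ ≤ |r| ^ m * Real.Gamma (x + ν) := by
        apply mul_le_mul_of_nonneg_left hkey (pow_nonneg habs m)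

lemma hasDerivAt_tsum_pow {a : ℕ → ℝ}
    (ha : ∀ r : ℝ, 0 ≤ r → Summable fun m : ℕ => |a m| * r ^ m) (x : ℝ) :
    HasDerivAt (fun z : ℝ => ∑' m : ℕ, a m * z ^ m)
      (∑' m : ℕ, ((m : ℝ) + 1) * a (m + 1) * x ^ m) x := by
  set R : ℝ := |x| + 1 with hR
  have hR1 : 1 ≤ R := by have := abs_nonneg x; simp only [hR]; linarith
  have hR0 : 0 < R := by linarith
  have hxR : x ∈ Metric.ball (0:ℝ) R := by
    simp only [Metric.mem_ball, Real.dist_eq, sub_zero, hR]; linarith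
  have hu : Summable (fun m : ℕ => ((m:ℝ)+1) * |a (m+1)| * R ^ m) := by
    have h2R' : Summable (fun m : ℕ => |a (m+1)| * (2*R) ^ (m+1)) :=
      (summable_nat_add_iff (f := fun m : ℕ => |a m| * (2*R) ^ m) 1).mpr (ha (2*R) (by positivity))
    refine h2R'.of_nonneg_of_le (fun m => by positivity) (fun m => ?_)
    have h1 : ((m:ℝ)+1) ≤ 2 ^ (m+1) := by
      exact_mod_cast (Nat.lt_two_pow_self (n := m+1)).le
    have h2 : ((m:ℝ)+1) * R ^ m ≤ (2*R) ^ (m+1) := by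
      calc ((m:ℝ)+1) * R ^ m ≤ 2 ^ (m+1) * R ^ m :=
            mul_le_mul_of_nonneg_right h1 (pow_nonneg hR0.le m)
        _ ≤ 2 ^ (m+1) * R ^ (m+1) := by
            apply mul_le_mul_of_nonneg_left (pow_le_pow_right₀ hR1 (Nat.le_succ m)) (by positivity)
        _ = (2*R) ^ (m+1) := (mul_pow 2 R (m+1)).symm
    calc ((m:ℝ)+1) * |a (m+1)| * R ^ m = |a (m+1)| * (((m:ℝ)+1) * R ^ m) := by ring
      _ ≤ |a (m+1)| * (2*R) ^ (m+1) := mul_le_mul_of_nonneg_left h2 (abs_nonneg _)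
  refine hasDerivAt_of_tendstoUniformlyOn (f := fun (n : ℕ) (z : ℝ) => ∑ m ∈ Finset.range (n+1), a m * z ^ m) (Metric.isOpen_ball)
    (tendstoUniformlyOn_tsum_nat (f := fun (m : ℕ) (z : ℝ) => ((m:ℝ)+1) * a (m+1) * z ^ m) hu (fun m z hz => ?_)) (Eventually.of_forall fun n => ?_)
    (fun z _ => ?_) hxR
  · -- uniform bound on derivatives
    have hzR : |z| ≤ R := by
      simp only [Metric.mem_ball, Real.dist_eq, sub_zero] at hz; exact hz.le
    have : ‖((m:ℝ)+1) * a (m+1) * z ^ m‖ = ((m:ℝ)+1) * |a (m+1)| * |z| ^ m := by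
      rw [norm_mul, norm_mul, Real.norm_eq_abs, Real.norm_eq_abs, Real.norm_eq_abs,
        abs_pow, abs_of_nonneg (by positivity : (0:ℝ) ≤ (m:ℝ)+1)]
    rw [this]
    exact mul_le_mul_of_nonneg_left (pow_le_pow_left₀ (abs_nonneg z) hzR m) (by positivity)
  · -- derivative of partial sums
    intro z _
    have hder : HasDerivAt (fun z : ℝ => ∑ m ∈ Finset.range (n+1), a m * z ^ m)
        (∑ m ∈ Finset.range (n+1), a m * ((m:ℕ) * z ^ (m-1))) z :=
      HasDerivAt.fun_sum fun m _ => (hasDerivAt_pow m z).const_mul (a m)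
    refine hder.congr_deriv ?_
    rw [Finset.sum_range_succ']
    simp only [Nat.cast_zero, zero_mul, mul_zero, add_zero]
    refine Finset.sum_congr rfl fun m _ => ?_
    simp only [Nat.cast_add, Nat.cast_one, Nat.add_sub_cancel]
    ring
  · -- pointwise convergence of partial sums
    have hs : Summable (fun m : ℕ => a m * z ^ m) := by
      refine (ha |z| (abs_nonneg z)).of_norm_bounded fun m => ?_
      rw [norm_mul, Real.norm_eq_abs, Real.norm_eq_abs, abs_pow]
    exact hs.hasSum.tendsto_sum_nat.comp (tendsto_add_atTop_nat 1)

lemma ML_eq (ν b : ℝ) : ML ν b = fun x => ∑' m : ℕ, (Real.Gamma (ν * m + b))⁻¹ * x ^ m := by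
  funext x
  exact tsum_congr fun m => by rw [div_eq_mul_inv, mul_comm]

lemma ML_abs_summable (hν0 : 0 < ν) (hν1 : ν ≤ 1) {b : ℝ} (hb : 0 < b) :
    ∀ r : ℝ, 0 ≤ r → Summable fun m : ℕ => |(Real.Gamma (ν * m + b))⁻¹| * r ^ m := by
  intro r hr
  have := ML_summable hν0 hν1 hb r
  refine this.congr fun m => ?_
  have hΓ : 0 < Real.Gamma (ν * m + b) := Real.Gamma_pos_of_pos (by positivity)
  rw [abs_of_nonneg (inv_nonneg.mpr hΓ.le), abs_of_nonneg hr, div_eq_mul_inv, mul_comm]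

lemma ML_hasDerivAt_aux (hν0 : 0 < ν) (hν1 : ν ≤ 1) {b : ℝ} (hb : 0 < b) (x : ℝ) :
    HasDerivAt (ML ν b)
      (∑' m : ℕ, ((m : ℝ) + 1) * (Real.Gamma (ν * (m + 1 : ℕ) + b))⁻¹ * x ^ m) x := by
  rw [ML_eq ν b]
  exact hasDerivAt_tsum_pow (ML_abs_summable hν0 hν1 hb) x

lemma ML_continuous (hν0 : 0 < ν) (hν1 : ν ≤ 1) {b : ℝ} (hb : 0 < b) :
    Continuous (ML ν b) :=
  continuous_iff_continuousAt.mpr fun x => (ML_hasDerivAt_aux hν0 hν1 hb x).continuousAt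

lemma ML_hasDerivAt (hν0 : 0 < ν) (hν1 : ν ≤ 1) (x : ℝ) :
    HasDerivAt (ML ν 1) (1/ν * ML ν ν x) x := by
  have h := ML_hasDerivAt_aux hν0 hν1 one_pos x
  convert h using 1
  rw [ML_eq ν ν, ← tsum_mul_left]
  refine tsum_congr fun m => ?_
  have hpos : 0 < ν * m + ν := by positivity
  have hΓ : Real.Gamma (ν * ((m : ℕ) + 1 : ℕ) + 1) = (ν * m + ν) * Real.Gamma (ν * m + ν) := by
    rw [show (ν * ((m : ℕ) + 1 : ℕ) + 1) = (ν * m + ν) + 1 by push_cast; ring]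
    exact Real.Gamma_add_one hpos.ne'
  have hΓpos : 0 < Real.Gamma (ν * m + ν) := Real.Gamma_pos_of_pos hpos
  rw [hΓ]
  field_simp

lemma ML_one_zero (a : ℝ) : ML a 1 0 = 1 := by
  rw [ML]
  rw [tsum_eq_single 0 (fun m hm => by
    rw [zero_pow hm, zero_div])]
  norm_num [Real.Gamma_one]

/-- Partial product `∏_{j<k} (j+1+νm)/(j+1+m)`. -/
noncomputable def Pp (ν : ℝ) (k m : ℕ) : ℝ :=
  ∏ j ∈ Finset.range k, ((j : ℝ) + 1 + ν * m) / ((j : ℝ) + 1 + m)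

lemma Pp_pos (hν0 : 0 < ν) (k m : ℕ) : 0 < Pp ν k m := by
  apply Finset.prod_pos
  intro j _
  have h1 : (0:ℝ) < (j:ℝ) + 1 + ν * m := by positivity
  have h2 : (0:ℝ) < (j:ℝ) + 1 + m := by positivity
  exact div_pos h1 h2

lemma Pp_le_one (hν0 : 0 < ν) (hν1 : ν ≤ 1) (k m : ℕ) : Pp ν k m ≤ 1 := by
  apply Finset.prod_le_one
  · intro j _
    have h1 : (0:ℝ) ≤ (j:ℝ) + 1 + ν * m := by positivity
    have h2 : (0:ℝ) < (j:ℝ) + 1 + m := by positivity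
    exact (div_nonneg h1 h2.le)
  · intro j _
    have h2 : (0:ℝ) < (j:ℝ) + 1 + m := by positivity
    rw [div_le_one h2]
    have : ν * m ≤ 1 * m := by
      apply mul_le_mul_of_nonneg_right hν1 (Nat.cast_nonneg m)
    linarith

/-- The approximating functions. -/
noncomputable def psi (ν : ℝ) (k : ℕ) (z : ℝ) : ℝ :=
  ∑' m : ℕ, (-z) ^ m / (m.factorial : ℝ) * Pp ν k m

lemma psi_summable (hν0 : 0 < ν) (hν1 : ν ≤ 1) (k : ℕ) (z : ℝ) :
    Summable (fun m : ℕ => (-z) ^ m / (m.factorial : ℝ) * Pp ν k m) := by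
  refine (Real.summable_pow_div_factorial |z|).of_norm_bounded fun m => ?_
  have hP0 := (Pp_pos hν0 k m).le
  have hP1 := Pp_le_one hν0 hν1 k m
  rw [Real.norm_eq_abs, abs_mul, abs_div, abs_pow, abs_neg, abs_of_nonneg hP0,
    abs_of_nonneg (by positivity : (0:ℝ) ≤ (m.factorial : ℝ))]
  calc |z| ^ m / (m.factorial : ℝ) * Pp ν k m ≤ |z| ^ m / (m.factorial : ℝ) * 1 := by
        apply mul_le_mul_of_nonneg_left hP1 (by positivity)
    _ = |z| ^ m / (m.factorial : ℝ) := mul_one _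

lemma psi_zero_eq (z : ℝ) : psi ν 0 z = Real.exp (-z) := by
  rw [psi]
  simp only [Pp, Finset.range_zero, Finset.prod_empty, mul_one]
  rw [Real.exp_eq_exp_ℝ, NormedSpace.exp_eq_tsum_div]

lemma psi_continuous (hν0 : 0 < ν) (hν1 : ν ≤ 1) (k : ℕ) : Continuous (psi ν k) := by
  have heq : psi ν k = fun z => ∑' m : ℕ, ((-1) ^ m * Pp ν k m / (m.factorial : ℝ)) * z ^ m := by
    funext z
    refine tsum_congr fun m => ?_
    rw [neg_pow]
    ring
  rw [heq]
  have ha : ∀ r : ℝ, 0 ≤ r →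
      Summable fun m : ℕ => |(-1:ℝ) ^ m * Pp ν k m / (m.factorial : ℝ)| * r ^ m := by
    intro r hr
    refine (Real.summable_pow_div_factorial r).of_nonneg_of_le (fun m => by positivity)
      fun m => ?_
    have hP0 := (Pp_pos hν0 k m).le
    have hP1 := Pp_le_one hν0 hν1 k m
    have h1 : |(-1:ℝ) ^ m * Pp ν k m / (m.factorial : ℝ)| = Pp ν k m / (m.factorial : ℝ) := by
      rw [abs_div, abs_mul, abs_pow, abs_neg, abs_one, one_pow, one_mul,
        abs_of_nonneg hP0, abs_of_nonneg (by positivity : (0:ℝ) ≤ (m.factorial : ℝ))]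
    rw [h1]
    calc Pp ν k m / (m.factorial : ℝ) * r ^ m ≤ 1 / (m.factorial : ℝ) * r ^ m := by
          gcongr
      _ = r ^ m / (m.factorial : ℝ) := by ring
  exact continuous_iff_continuousAt.mpr fun x => (hasDerivAt_tsum_pow ha x).continuousAt

lemma psi_succ (hν0 : 0 < ν) (hν1 : ν ≤ 1) (k : ℕ) (z : ℝ) :
    psi ν (k+1) z = ν * psi ν k z +
      (1-ν) * ∫ s in Ioc (0:ℝ) 1, ((k:ℝ)+1) * s ^ k * psi ν k (z * s) := by
  have hfac : ∀ m : ℕ, (0:ℝ) < (m.factorial : ℝ) := fun m => by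
    exact_mod_cast m.factorial_pos
  have h1 : Summable (fun m : ℕ => (-z) ^ m / (m.factorial : ℝ) * Pp ν k m) :=
    psi_summable hν0 hν1 k z
  have h2 : Summable (fun m : ℕ =>
      (-z) ^ m / (m.factorial : ℝ) * Pp ν k m * (((k:ℝ)+1)/((k:ℝ)+1+m))) := by
    refine (Real.summable_pow_div_factorial |z|).of_norm_bounded fun m => ?_
    rw [norm_mul, norm_mul, Real.norm_eq_abs, Real.norm_eq_abs, Real.norm_eq_abs,
      abs_div, abs_pow, abs_neg, abs_of_nonneg (hfac m).le,
      abs_of_nonneg (Pp_pos hν0 k m).le, abs_div,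
      abs_of_nonneg (by positivity : (0:ℝ) ≤ (k:ℝ)+1),
      abs_of_nonneg (by positivity : (0:ℝ) ≤ (k:ℝ)+1+m)]
    calc |z| ^ m / (m.factorial : ℝ) * Pp ν k m * (((k:ℝ)+1)/((k:ℝ)+1+m))
        ≤ |z| ^ m / (m.factorial : ℝ) * 1 * 1 := by
          gcongr
          all_goals first
            | exact (Pp_pos hν0 k m).le
            | exact Pp_le_one hν0 hν1 k m
            | positivity
            | (rw [div_le_one (by positivity)]
               have : (0:ℝ) ≤ (m:ℝ) := Nat.cast_nonneg m
               linarith)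
      _ = |z| ^ m / (m.factorial : ℝ) := by ring
  set F : ℕ → ℝ → ℝ := fun m s =>
    ((k:ℝ)+1) * s ^ k * ((-(z*s)) ^ m / (m.factorial : ℝ) * Pp ν k m) with hF
  have hFcont : ∀ m, Continuous (F m) := by
    intro m; rw [hF]; fun_prop
  have hFint : ∀ m, IntegrableOn (F m) (Ioc (0:ℝ) 1) := fun m =>
    (hFcont m).integrableOn_Ioc
  have hFbound : ∀ m, ∀ s ∈ Ioc (0:ℝ) 1, ‖F m s‖ ≤ ((k:ℝ)+1) * (|z| ^ m / (m.factorial : ℝ)) := by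
    intro m s hs
    obtain ⟨hs0, hs1⟩ := hs
    have habs : |(-(z*s))| ≤ |z| := by
      rw [abs_neg, abs_mul]
      calc |z| * |s| ≤ |z| * 1 := by
            gcongr
            rw [abs_of_nonneg hs0.le]; exact hs1
        _ = |z| := mul_one _
    have hnorm : ‖F m s‖ = ((k:ℝ)+1) * s ^ k * (|(-(z*s))| ^ m / (m.factorial : ℝ) * Pp ν k m) := by
      rw [hF]
      simp only []
      rw [norm_mul, norm_mul, norm_mul, Real.norm_eq_abs, Real.norm_eq_abs, Real.norm_eq_abs,
        Real.norm_eq_abs, abs_div, abs_pow, abs_pow,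
        abs_of_nonneg (by positivity : (0:ℝ) ≤ (k:ℝ)+1), abs_of_nonneg hs0.le,
        abs_of_nonneg (hfac m).le, abs_of_nonneg (Pp_pos hν0 k m).le]
    rw [hnorm]
    calc ((k:ℝ)+1) * s ^ k * (|(-(z*s))| ^ m / (m.factorial : ℝ) * Pp ν k m)
        ≤ ((k:ℝ)+1) * 1 * (|z| ^ m / (m.factorial : ℝ) * 1) := by
          gcongr
          all_goals first
            | exact (Pp_pos hν0 k m).le
            | exact Pp_le_one hν0 hν1 k m
            | exact pow_le_one₀ hs0.le hs1
            | exact habs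
            | exact abs_nonneg _
            | exact mul_nonneg (by positivity) (Pp_pos hν0 k m).le
            | positivity
      _ = ((k:ℝ)+1) * (|z| ^ m / (m.factorial : ℝ)) := by ring
  have hsum_int : Summable (fun m => ∫ s in Ioc (0:ℝ) 1, ‖F m s‖) := by
    refine Summable.of_nonneg_of_le
      (fun m => integral_nonneg fun s => norm_nonneg _) (fun m => ?_)
      (((Real.summable_pow_div_factorial |z|).mul_left ((k:ℝ)+1)))
    have hconst : IntegrableOn (fun _ : ℝ => ((k:ℝ)+1) * (|z| ^ m / (m.factorial : ℝ)))
        (Ioc (0:ℝ) 1) := integrableOn_const (by simp [Real.volume_Ioc])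
    calc (∫ s in Ioc (0:ℝ) 1, ‖F m s‖)
        ≤ ∫ _ in Ioc (0:ℝ) 1, ((k:ℝ)+1) * (|z| ^ m / (m.factorial : ℝ)) :=
          setIntegral_mono_on (hFint m).norm hconst measurableSet_Ioc (hFbound m)
      _ = ((k:ℝ)+1) * (|z| ^ m / (m.factorial : ℝ)) := by
          rw [setIntegral_const]
          simp [Real.volume_Ioc]
  have hswap : ∑' m, (∫ s in Ioc (0:ℝ) 1, F m s) = ∫ s in Ioc (0:ℝ) 1, (∑' m, F m s) :=
    integral_tsum_of_summable_integral_norm hFint hsum_int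
  have hptsum : ∀ s : ℝ, (∑' m, F m s) = ((k:ℝ)+1) * s ^ k * psi ν k (z*s) := by
    intro s
    rw [psi, ← tsum_mul_left]
  have hval : ∀ m, (∫ s in Ioc (0:ℝ) 1, F m s)
      = (-z) ^ m / (m.factorial : ℝ) * Pp ν k m * (((k:ℝ)+1)/((k:ℝ)+1+m)) := by
    intro m
    have hpow : (∫ s in Ioc (0:ℝ) 1, s ^ (k+m)) = 1/((k:ℝ)+m+1) := by
      rw [← intervalIntegral.integral_of_le (zero_le_one)]
      rw [integral_pow]
      push_cast
      norm_num
    have hre : ∀ s : ℝ, F m s = ((-z) ^ m / (m.factorial : ℝ) * Pp ν k m * ((k:ℝ)+1)) * s ^ (k+m) := by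
      intro s
      rw [hF]
      simp only []
      rw [show -(z*s) = (-z)*s by ring, mul_pow, pow_add]
      ring
    rw [integral_congr_ae (ae_of_all _ hre), MeasureTheory.integral_const_mul, hpow]
    ring
  have hPsucc : ∀ m : ℕ, Pp ν (k+1) m = Pp ν k m * (((k:ℝ)+1+ν*m)/((k:ℝ)+1+m)) := by
    intro m
    rw [Pp, Pp, Finset.prod_range_succ]
  have hmain : psi ν (k+1) z = ∑' m : ℕ, (ν * ((-z) ^ m / (m.factorial : ℝ) * Pp ν k m)
      + (1-ν) * ((-z) ^ m / (m.factorial : ℝ) * Pp ν k m * (((k:ℝ)+1)/((k:ℝ)+1+m)))) := by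
    rw [psi]
    refine tsum_congr fun m => ?_
    rw [hPsucc m]
    have hd : ((k:ℝ)+1+m) ≠ 0 := by positivity
    field_simp
    ring
  rw [hmain, Summable.tsum_add (h1.mul_left ν) (h2.mul_left (1-ν)), tsum_mul_left, tsum_mul_left]
  congr 1
  have : (∑' m : ℕ, (-z) ^ m / (m.factorial : ℝ) * Pp ν k m * (((k:ℝ)+1)/((k:ℝ)+1+m)))
      = ∫ s in Ioc (0:ℝ) 1, ((k:ℝ)+1) * s ^ k * psi ν k (z * s) := by
    calc (∑' m : ℕ, (-z) ^ m / (m.factorial : ℝ) * Pp ν k m * (((k:ℝ)+1)/((k:ℝ)+1+m)))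
        = ∑' m : ℕ, (∫ s in Ioc (0:ℝ) 1, F m s) := tsum_congr fun m => (hval m).symm
      _ = ∫ s in Ioc (0:ℝ) 1, (∑' m, F m s) := hswap
      _ = ∫ s in Ioc (0:ℝ) 1, ((k:ℝ)+1) * s ^ k * psi ν k (z * s) :=
          integral_congr_ae (ae_of_all _ hptsum)
  rw [this]

lemma psi_bounds (hν0 : 0 < ν) (hν1 : ν ≤ 1) :
    ∀ k : ℕ, ∀ z1 z2 : ℝ, 0 ≤ z1 → z1 ≤ z2 →
      0 ≤ psi ν k z2 ∧ psi ν k z2 ≤ psi ν k z1 ∧ psi ν k z1 ≤ 1 := by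
  intro k
  induction k with
  | zero =>
    intro z1 z2 h0 h12
    rw [psi_zero_eq, psi_zero_eq]
    exact ⟨(Real.exp_pos _).le, Real.exp_le_exp.mpr (by linarith),
      Real.exp_le_one_iff.mpr (by linarith)⟩
  | succ k IH =>
    intro z1 z2 h0 h12
    have hz2 : 0 ≤ z2 := le_trans h0 h12
    have hν1' : (0:ℝ) ≤ 1 - ν := by linarith
    have hcont := psi_continuous hν0 hν1 k
    have hIcont : ∀ z : ℝ,
        IntegrableOn (fun s => ((k:ℝ)+1) * s ^ k * psi ν k (z*s)) (Ioc (0:ℝ) 1) := by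
      intro z
      apply Continuous.integrableOn_Ioc
      fun_prop
    have hpt01 : ∀ z : ℝ, 0 ≤ z → ∀ s ∈ Ioc (0:ℝ) 1,
        0 ≤ psi ν k (z*s) ∧ psi ν k (z*s) ≤ 1 := by
      intro z hz s hs
      have h := IH (z*s) (z*s) (mul_nonneg hz hs.1.le) le_rfl
      exact ⟨h.1, h.2.2⟩
    have hI0 : ∀ z : ℝ, 0 ≤ z →
        0 ≤ ∫ s in Ioc (0:ℝ) 1, ((k:ℝ)+1) * s ^ k * psi ν k (z*s) := by
      intro z hz
      apply setIntegral_nonneg measurableSet_Ioc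
      intro s hs
      have := (hpt01 z hz s hs).1
      have hs0 := hs.1.le
      positivity
    have hIone : (∫ s in Ioc (0:ℝ) 1, ((k:ℝ)+1) * s ^ k) = 1 := by
      rw [← intervalIntegral.integral_of_le zero_le_one,
        intervalIntegral.integral_const_mul, integral_pow]
      push_cast
      field_simp
      simp
    have hI1 : ∀ z : ℝ, 0 ≤ z →
        (∫ s in Ioc (0:ℝ) 1, ((k:ℝ)+1) * s ^ k * psi ν k (z*s)) ≤ 1 := by
      intro z hz
      calc (∫ s in Ioc (0:ℝ) 1, ((k:ℝ)+1) * s ^ k * psi ν k (z*s))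
          ≤ ∫ s in Ioc (0:ℝ) 1, ((k:ℝ)+1) * s ^ k := by
            apply setIntegral_mono_on (hIcont z) (by
              apply Continuous.integrableOn_Ioc; fun_prop) measurableSet_Ioc
            intro s hs
            have h1 := (hpt01 z hz s hs).2
            have hs0 := hs.1.le
            calc ((k:ℝ)+1) * s ^ k * psi ν k (z*s) ≤ ((k:ℝ)+1) * s ^ k * 1 := by
                  apply mul_le_mul_of_nonneg_left h1 (by positivity)
              _ = ((k:ℝ)+1) * s ^ k := mul_one _
        _ = 1 := hIone
    have hImono : (∫ s in Ioc (0:ℝ) 1, ((k:ℝ)+1) * s ^ k * psi ν k (z2*s))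
        ≤ ∫ s in Ioc (0:ℝ) 1, ((k:ℝ)+1) * s ^ k * psi ν k (z1*s) := by
      apply setIntegral_mono_on (hIcont z2) (hIcont z1) measurableSet_Ioc
      intro s hs
      have h := (IH (z1*s) (z2*s) (mul_nonneg h0 hs.1.le)
        (mul_le_mul_of_nonneg_right h12 hs.1.le)).2.1
      have hs0 := hs.1.le
      apply mul_le_mul_of_nonneg_left h (by positivity)
    rw [psi_succ hν0 hν1 k z1, psi_succ hν0 hν1 k z2]
    have hIH := IH z1 z2 h0 h12
    refine ⟨?_, ?_, ?_⟩
    · have a1 := mul_nonneg hν0.le hIH.1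
      have a2 := mul_nonneg hν1' (hI0 z2 hz2)
      linarith
    · have b1 := mul_le_mul_of_nonneg_left hIH.2.1 hν0.le
      have b2 := mul_le_mul_of_nonneg_left hImono hν1'
      linarith
    · have c1 := mul_le_mul_of_nonneg_left hIH.2.2 hν0.le
      have c2 := mul_le_mul_of_nonneg_left (hI1 z1 h0) hν1'
      linarith

/-- The ratio of Gamma sequences. -/
noncomputable def betaSeq (ν : ℝ) (m n : ℕ) : ℝ :=
  Real.GammaSeq ((m:ℝ)+1) n / Real.GammaSeq (ν*(m:ℝ)+1) n

lemma betaSeq_eq (hν0 : 0 < ν) (m : ℕ) {n : ℕ} (hn : 1 ≤ n) :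
    betaSeq ν m n = (n:ℝ) ^ ((1-ν) * (m:ℝ)) * Pp ν (n+1) m := by
  have hn0 : (0:ℝ) < n := by exact_mod_cast hn
  have hfac : ((n.factorial : ℝ)) ≠ 0 := by
    exact_mod_cast n.factorial_ne_zero
  have hP1 : ∀ j ∈ Finset.range (n+1), ((m:ℝ)+1 + (j:ℝ)) ≠ 0 := by
    intro j _; positivity
  have hP2 : ∀ j ∈ Finset.range (n+1), (ν*(m:ℝ)+1 + (j:ℝ)) ≠ 0 := by
    intro j _; positivity
  have hprod1 : (∏ j ∈ Finset.range (n+1), ((m:ℝ)+1 + (j:ℝ))) ≠ 0 :=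
    Finset.prod_ne_zero_iff.mpr hP1
  have hprod2 : (∏ j ∈ Finset.range (n+1), (ν*(m:ℝ)+1 + (j:ℝ))) ≠ 0 :=
    Finset.prod_ne_zero_iff.mpr hP2
  have hpow : (n:ℝ) ^ ((m:ℝ)+1) = (n:ℝ) ^ ((1-ν)*(m:ℝ)) * (n:ℝ) ^ (ν*(m:ℝ)+1) := by
    rw [← Real.rpow_add hn0]
    ring_nf
  have hPp : Pp ν (n+1) m = (∏ j ∈ Finset.range (n+1), (ν*(m:ℝ)+1 + (j:ℝ)))
      / (∏ j ∈ Finset.range (n+1), ((m:ℝ)+1 + (j:ℝ))) := by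
    rw [Pp, ← Finset.prod_div_distrib]
    refine Finset.prod_congr rfl fun j _ => ?_
    rw [show (j:ℝ) + 1 + ν * m = ν*(m:ℝ)+1 + (j:ℝ) by ring,
      show (j:ℝ) + 1 + (m:ℝ) = (m:ℝ)+1 + (j:ℝ) by ring]
  rw [betaSeq, Real.GammaSeq, Real.GammaSeq, hPp, hpow]
  have hrp : (0:ℝ) < (n:ℝ) ^ (ν*(m:ℝ)+1) := Real.rpow_pos_of_pos hn0 _
  field_simp

lemma Pp_succ_top (ν : ℝ) (k m : ℕ) :
    Pp ν (k+1) m = Pp ν k m * (((k:ℝ)+1+ν*m)/((k:ℝ)+1+m)) := by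
  rw [Pp, Pp, Finset.prod_range_succ]

lemma betaSeq_mono (hν0 : 0 < ν) (hν1 : ν ≤ 1) (m : ℕ) {n : ℕ} (hn : 1 ≤ n) :
    betaSeq ν m n ≤ betaSeq ν m (n+1) := by
  have hn0 : (0:ℝ) < n := by exact_mod_cast hn
  have hn1 : (0:ℝ) < (n:ℝ)+1 := by positivity
  rw [betaSeq_eq hν0 m hn, betaSeq_eq hν0 m (le_trans hn (Nat.le_succ n))]
  have hcast : (((n+1 : ℕ)):ℝ) = (n:ℝ)+1 := by push_cast; ring
  rw [hcast]
  set p := (1-ν) * (m:ℝ) with hp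
  have hp0 : 0 ≤ p := mul_nonneg (by linarith) (Nat.cast_nonneg m)
  have hPpos := Pp_pos hν0 (n+1) m
  have hnum : (0:ℝ) < ((n:ℝ)+1)+1+ν*m := by positivity
  have hden : (0:ℝ) < ((n:ℝ)+1)+1+(m:ℝ) := by positivity
  have hexp : Real.exp (1/((n:ℝ)+1)) ≤ ((n:ℝ)+1)/n := by
    have heq : -(1/((n:ℝ)+1)) + 1 = (n:ℝ)/((n:ℝ)+1) := by field_simp; ring
    have e1 : (n:ℝ)/((n:ℝ)+1) ≤ Real.exp (-(1/((n:ℝ)+1))) := by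
      have := Real.add_one_le_exp (-(1/((n:ℝ)+1)))
      linarith
    have hpos : (0:ℝ) < Real.exp (-(1/((n:ℝ)+1))) := Real.exp_pos _
    rw [show (1/((n:ℝ)+1)) = -(-(1/((n:ℝ)+1))) by ring, Real.exp_neg]
    rw [inv_eq_one_div, div_le_div_iff₀ hpos hn0]
    have hid : ((n:ℝ)+1)*((n:ℝ)/((n:ℝ)+1)) = n := by field_simp
    nlinarith [mul_le_mul_of_nonneg_left e1 hn1.le]
  have hr1 : (n:ℝ)^p * Real.exp (p * (1/((n:ℝ)+1))) ≤ ((n:ℝ)+1)^p := by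
    have hdiv : ((n:ℝ)+1)^p = (n:ℝ)^p * (((n:ℝ)+1)/n)^p := by
      rw [← Real.mul_rpow hn0.le (by positivity)]
      congr 1
      field_simp
    rw [hdiv]
    apply mul_le_mul_of_nonneg_left _ (Real.rpow_nonneg hn0.le p)
    calc Real.exp (p * (1/((n:ℝ)+1))) = (Real.exp (1/((n:ℝ)+1)))^p := by
          rw [Real.rpow_def_of_pos (Real.exp_pos _), Real.log_exp, mul_comm]
      _ ≤ (((n:ℝ)+1)/n)^p := Real.rpow_le_rpow (Real.exp_pos _).le hexp hp0
  have he2 : 1 + p * (1/((n:ℝ)+1)) ≤ Real.exp (p * (1/((n:ℝ)+1))) := by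
    have := Real.add_one_le_exp (p * (1/((n:ℝ)+1)))
    linarith
  have hratio : 1 ≤ (1 + p * (1/((n:ℝ)+1))) * ((((n:ℝ)+1)+1+ν*m)/(((n:ℝ)+1)+1+m)) := by
    rw [← mul_div_assoc, le_div_iff₀ hden]
    have hfrac : p ≤ p * (1/((n:ℝ)+1)) * (((n:ℝ)+1)+1+ν*m) := by
      have hνm : (0:ℝ) ≤ ν*m := by positivity
      calc p = p * (1/((n:ℝ)+1)) * ((n:ℝ)+1) := by field_simp
        _ ≤ p * (1/((n:ℝ)+1)) * (((n:ℝ)+1)+1+ν*m) := by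
            apply mul_le_mul_of_nonneg_left (by linarith) (by positivity)
    have hmv : ν*(m:ℝ) + p = (m:ℝ) := by rw [hp]; ring
    nlinarith [hfrac]
  have hkey : (n:ℝ)^p ≤ ((n:ℝ)+1)^p * ((((n:ℝ)+1)+1+ν*m)/(((n:ℝ)+1)+1+m)) := by
    have hrnn : (0:ℝ) ≤ (n:ℝ)^p := Real.rpow_nonneg hn0.le p
    have hqnn : (0:ℝ) ≤ (((n:ℝ)+1)+1+ν*m)/(((n:ℝ)+1)+1+m) := by positivity
    calc (n:ℝ)^p = (n:ℝ)^p * 1 := (mul_one _).symm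
      _ ≤ (n:ℝ)^p * ((1 + p * (1/((n:ℝ)+1))) * ((((n:ℝ)+1)+1+ν*m)/(((n:ℝ)+1)+1+m))) :=
          mul_le_mul_of_nonneg_left hratio hrnn
      _ = ((n:ℝ)^p * (1 + p * (1/((n:ℝ)+1)))) * ((((n:ℝ)+1)+1+ν*m)/(((n:ℝ)+1)+1+m)) := by
          ring
      _ ≤ ((n:ℝ)^p * Real.exp (p * (1/((n:ℝ)+1)))) * ((((n:ℝ)+1)+1+ν*m)/(((n:ℝ)+1)+1+m)) := by
          apply mul_le_mul_of_nonneg_right (mul_le_mul_of_nonneg_left he2 hrnn) hqnn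
      _ ≤ ((n:ℝ)+1)^p * ((((n:ℝ)+1)+1+ν*m)/(((n:ℝ)+1)+1+m)) :=
          mul_le_mul_of_nonneg_right hr1 hqnn
  have hfactor : Pp ν (n+1+1) m = Pp ν (n+1) m * ((((n:ℝ)+1)+1+ν*m)/(((n:ℝ)+1)+1+m)) := by
    rw [Pp_succ_top]
    push_cast
    ring_nf
  rw [hfactor]
  calc (n:ℝ)^p * Pp ν (n+1) m
      ≤ (((n:ℝ)+1)^p * ((((n:ℝ)+1)+1+ν*m)/(((n:ℝ)+1)+1+m))) * Pp ν (n+1) m :=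
        mul_le_mul_of_nonneg_right hkey hPpos.le
    _ = ((n:ℝ)+1)^p * (Pp ν (n+1) m * ((((n:ℝ)+1)+1+ν*m)/(((n:ℝ)+1)+1+m))) := by ring

lemma betaSeq_tendsto (hν0 : 0 < ν) (m : ℕ) :
    Tendsto (betaSeq ν m) atTop (𝓝 ((m.factorial : ℝ) / Real.Gamma (ν*(m:ℝ)+1))) := by
  have hne : Real.Gamma (ν*(m:ℝ)+1) ≠ 0 := (Real.Gamma_pos_of_pos (by positivity)).ne'
  have h := (Real.GammaSeq_tendsto_Gamma ((m:ℝ)+1)).div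
    (Real.GammaSeq_tendsto_Gamma (ν*(m:ℝ)+1)) hne
  have hΓm : Real.Gamma ((m:ℝ)+1) = (m.factorial : ℝ) := Real.Gamma_nat_eq_factorial m
  rwa [hΓm] at h

lemma betaSeq_le (hν0 : 0 < ν) (hν1 : ν ≤ 1) (m : ℕ) {n : ℕ} (hn : 1 ≤ n) :
    betaSeq ν m n ≤ (m.factorial : ℝ) / Real.Gamma (ν*(m:ℝ)+1) := by
  apply ge_of_tendsto (betaSeq_tendsto hν0 m)
  filter_upwards [eventually_ge_atTop n] with N hN
  induction N, hN using Nat.le_induction with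
  | base => exact le_rfl
  | succ N hNn ih => exact le_trans ih (betaSeq_mono hν0 hν1 m (le_trans hn hNn))

lemma betaSeq_nonneg (hν0 : 0 < ν) (m : ℕ) {n : ℕ} (hn : 1 ≤ n) :
    0 ≤ betaSeq ν m n := by
  rw [betaSeq_eq hν0 m hn]
  have hn0 : (0:ℝ) < n := by exact_mod_cast hn
  exact mul_nonneg (Real.rpow_nonneg hn0.le _) (Pp_pos hν0 (n+1) m).le

lemma ML_neg_le (hν0 : 0 < ν) (hν1 : ν ≤ 1) {y1 y2 : ℝ} (h0 : 0 ≤ y1) (h12 : y1 ≤ y2) :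
    0 ≤ ML ν 1 (-y2) ∧ ML ν 1 (-y2) ≤ ML ν 1 (-y1) ∧ ML ν 1 (-y1) ≤ 1 := by
  have hy2 : 0 ≤ y2 := le_trans h0 h12
  have hA_eq : ∀ y : ℝ, ∀ n : ℕ,
      psi ν ((n+1)+1) ((((n+1:ℕ)):ℝ) ^ (1-ν) * y)
        = ∑' m : ℕ, (-y)^m / (m.factorial : ℝ) * betaSeq ν m (n+1) := by
    intro y n
    rw [psi]
    refine tsum_congr fun m => ?_
    have hn1 : (0:ℝ) < ((n+1:ℕ):ℝ) := by positivity
    rw [betaSeq_eq hν0 m (Nat.le_add_left 1 n)]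
    have hc : (-((((n+1:ℕ)):ℝ) ^ (1-ν) * y))^m
        = ((((n+1:ℕ)):ℝ) ^ ((1-ν)*(m:ℝ))) * (-y)^m := by
      rw [show -((((n+1:ℕ)):ℝ) ^ (1-ν) * y) = (((n+1:ℕ)):ℝ) ^ (1-ν) * (-y) by ring, mul_pow]
      congr 1
      rw [← Real.rpow_natCast ((((n+1:ℕ)):ℝ) ^ (1-ν)) m, ← Real.rpow_mul hn1.le]
    rw [hc]
    ring
  have hlim : ∀ y : ℝ, 0 ≤ y →
      Tendsto (fun n : ℕ => ∑' m : ℕ, (-y)^m / (m.factorial : ℝ) * betaSeq ν m (n+1))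
        atTop (𝓝 (ML ν 1 (-y))) := by
    intro y hy
    have hML : ML ν 1 (-y) = ∑' m : ℕ, (-y)^m / Real.Gamma (ν*(m:ℝ)+1) := rfl
    rw [hML]
    have hsum : Summable (fun m : ℕ => y^m / Real.Gamma (ν*(m:ℝ)+1)) := by
      have := ML_summable hν0 hν1 one_pos y
      rwa [abs_of_nonneg hy] at this
    apply tendsto_tsum_of_dominated_convergence hsum
    · intro m
      have hfne : ((m.factorial : ℝ)) ≠ 0 := by exact_mod_cast m.factorial_ne_zero
      have hΓne : Real.Gamma (ν*(m:ℝ)+1) ≠ 0 := (Real.Gamma_pos_of_pos (by positivity)).ne'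
      have h := ((betaSeq_tendsto hν0 m).comp (tendsto_add_atTop_nat 1)).const_mul
        ((-y)^m / (m.factorial : ℝ))
      have heq : (-y)^m / (m.factorial : ℝ) * ((m.factorial : ℝ) / Real.Gamma (ν*(m:ℝ)+1))
          = (-y)^m / Real.Gamma (ν*(m:ℝ)+1) := by
        field_simp
      rw [heq] at h
      exact h
    · filter_upwards with n
      intro m
      have hb1 := betaSeq_nonneg hν0 m (Nat.le_add_left 1 n)
      have hb2 := betaSeq_le hν0 hν1 m (Nat.le_add_left 1 n)
      have hΓpos : 0 < Real.Gamma (ν*(m:ℝ)+1) := Real.Gamma_pos_of_pos (by positivity)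
      have hfpos : (0:ℝ) < (m.factorial : ℝ) := by exact_mod_cast m.factorial_pos
      rw [Real.norm_eq_abs, abs_mul, abs_div, abs_pow, abs_neg, abs_of_nonneg hy,
        abs_of_nonneg hfpos.le, abs_of_nonneg hb1]
      calc y^m / (m.factorial : ℝ) * betaSeq ν m (n+1)
          ≤ y^m / (m.factorial : ℝ) * ((m.factorial : ℝ) / Real.Gamma (ν*(m:ℝ)+1)) := by
            apply mul_le_mul_of_nonneg_left hb2 (by positivity)
        _ = y^m / Real.Gamma (ν*(m:ℝ)+1) := by field_simp
  have hpsacez : ∀ y : ℝ, 0 ≤ y → ∀ n : ℕ, 0 ≤ (((n+1:ℕ)):ℝ) ^ (1-ν) * y := by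
    intro y hy n
    have : (0:ℝ) < ((n+1:ℕ):ℝ) := by positivity
    exact mul_nonneg (Real.rpow_nonneg this.le _) hy
  refine ⟨?_, ?_, ?_⟩
  · apply ge_of_tendsto (hlim y2 hy2)
    filter_upwards with n
    rw [← hA_eq y2 n]
    exact (psi_bounds hν0 hν1 ((n+1)+1) _ _ (hpsacez y2 hy2 n) le_rfl).1
  · apply le_of_tendsto_of_tendsto' (hlim y2 hy2) (hlim y1 h0)
    intro n
    rw [← hA_eq y2 n, ← hA_eq y1 n]
    refine (psi_bounds hν0 hν1 ((n+1)+1) _ _ (hpsacez y1 h0 n) ?_).2.1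
    apply mul_le_mul_of_nonneg_left h12
    have : (0:ℝ) < ((n+1:ℕ):ℝ) := by positivity
    exact Real.rpow_nonneg this.le _
  · apply le_of_tendsto (hlim y1 h0)
    filter_upwards with n
    rw [← hA_eq y1 n]
    exact (psi_bounds hν0 hν1 ((n+1)+1) _ _ (hpsacez y1 h0 n) le_rfl).2.2

end MittagLefflerAux

theorem stmt7 (lam ν t : ℝ) (hlam : 0 < lam) (hν0 : 0 < ν) (hν1 : ν ≤ 1) (ht : 0 < t) :
    (lam * t ^ ν / ν) * ∫ w in Set.Ioi (0:ℝ), Real.exp (-w) * ML ν ν (-w * lam * t ^ ν)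
      = 1 - ∫ w in Set.Ioi (0:ℝ), Real.exp (-w) * ML ν 1 (-lam * t ^ ν * w) := by
  have htν : 0 < t ^ ν := Real.rpow_pos_of_pos ht ν
  set c : ℝ := lam * t ^ ν with hc
  have hc0 : 0 < c := mul_pos hlam htν
  set u : ℝ → ℝ := fun w => ML ν 1 (-(c*w)) with hu
  set v : ℝ → ℝ := fun w => ML ν ν (-(c*w)) with hv
  have hu_der : ∀ w : ℝ, HasDerivAt u (-(c/ν) * v w) w := by
    intro w
    have h2 : HasDerivAt (fun w : ℝ => -(c*w)) (-c) w := by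
      simpa using (hasDerivAt_id w).const_mul (-c)
    have h1 := (ML_hasDerivAt hν0 hν1 (-(c*w))).comp w h2
    have h3 : -(c/ν) * v w = (1/ν * ML ν ν (-(c*w))) * (-c) := by
      rw [hv]; ring
    rw [h3, hu]
    exact h1
  have hv_cont : Continuous v := by
    rw [hv]
    exact (ML_continuous hν0 hν1 hν0).comp (by fun_prop)
  have hu_cont : Continuous u := continuous_iff_continuousAt.mpr fun w => (hu_der w).continuousAt
  have hbounds : ∀ w : ℝ, 0 ≤ w → 0 ≤ u w ∧ u w ≤ 1 := by
    intro w hw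
    have h := ML_neg_le hν0 hν1 (y1 := c*w) (y2 := c*w) (by positivity) le_rfl
    exact ⟨h.1, h.2.2⟩
  have hmono : ∀ w1 w2 : ℝ, 0 ≤ w1 → w1 ≤ w2 → u w2 ≤ u w1 := by
    intro w1 w2 h1 h2
    simp only [hu]
    exact (ML_neg_le hν0 hν1 (y1 := c*w1) (y2 := c*w2) (by positivity)
      (mul_le_mul_of_nonneg_left h2 hc0.le)).2.1
  obtain ⟨L, hL⟩ : ∃ L, Tendsto u atTop (𝓝 L) := by
    set ut : ℝ → ℝ := fun w => u (max w 0) with hut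
    have hanti : Antitone ut := by
      intro w1 w2 h
      simp only [hut]
      exact hmono _ _ (le_max_right w1 0) (max_le_max h le_rfl)
    have hbdd : BddBelow (range ut) := by
      refine ⟨0, ?_⟩
      rintro x ⟨w, rfl⟩
      exact (hbounds (max w 0) (le_max_right w 0)).1
    refine ⟨⨅ w, ut w, ?_⟩
    apply (tendsto_atTop_ciInf hanti hbdd).congr'
    filter_upwards [eventually_ge_atTop (0:ℝ)] with w hw
    simp only [hut, max_eq_left hw]
  have hv0 : ∀ w : ℝ, 0 < w → 0 ≤ v w := by
    intro w hw
    have hslope := hasDerivAt_iff_tendsto_slope.mp (hu_der w)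
    have h2 : Tendsto (slope u w) (𝓝[>] w) (𝓝 (-(c/ν) * v w)) :=
      hslope.mono_left (nhdsWithin_mono w fun y hy => ne_of_gt hy)
    have hle : -(c/ν) * v w ≤ 0 := by
      apply le_of_tendsto h2
      filter_upwards [self_mem_nhdsWithin] with y hy
      rw [slope_def_field]
      apply div_nonpos_iff.mpr
      refine Or.inr ⟨?_, ?_⟩
      · have := hmono w y hw.le (le_of_lt hy)
        linarith
      · have : w < y := hy
        linarith
    nlinarith [div_pos hc0 hν0]
  have hg_der : ∀ w ∈ Ici (0:ℝ), HasDerivAt (fun w => -(ν/c) * u w) (v w) w := by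
    intro w _
    have h := (hu_der w).const_mul (-(ν/c))
    have heq : -(ν/c) * (-(c/ν) * v w) = v w := by
      field_simp
    rwa [heq] at h
  have hv_int : IntegrableOn v (Ioi (0:ℝ)) := by
    apply integrableOn_Ioi_deriv_of_nonneg' hg_der (fun x hx => hv0 x hx)
    exact hL.const_mul (-(ν/c))
  have hexp_int : IntegrableOn (fun w : ℝ => Real.exp (-w)) (Ioi (0:ℝ)) := by
    have := exp_neg_integrableOn_Ioi (0:ℝ) (one_pos)
    simpa using this
  have hEu_int : IntegrableOn (fun w => Real.exp (-w) * u w) (Ioi (0:ℝ)) := by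
    apply Integrable.mono' hexp_int
    · exact ((Real.continuous_exp.comp continuous_neg).mul hu_cont).aestronglyMeasurable
    · rw [ae_restrict_iff' measurableSet_Ioi]
      apply ae_of_all
      intro w hw
      have hb := hbounds w (le_of_lt hw)
      rw [Real.norm_eq_abs, abs_mul, abs_of_nonneg (Real.exp_pos _).le, abs_of_nonneg hb.1]
      calc Real.exp (-w) * u w ≤ Real.exp (-w) * 1 :=
            mul_le_mul_of_nonneg_left hb.2 (Real.exp_pos _).le
        _ = Real.exp (-w) := mul_one _
  have hEv_int : IntegrableOn (fun w => Real.exp (-w) * v w) (Ioi (0:ℝ)) := by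
    apply Integrable.mono' hv_int
    · exact ((Real.continuous_exp.comp continuous_neg).mul hv_cont).aestronglyMeasurable
    · rw [ae_restrict_iff' measurableSet_Ioi]
      apply ae_of_all
      intro w hw
      have hvw := hv0 w hw
      rw [Real.norm_eq_abs, abs_mul, abs_of_nonneg (Real.exp_pos _).le, abs_of_nonneg hvw]
      have hw' : (0:ℝ) < w := hw
      have hexp1 : Real.exp (-w) ≤ 1 := by
        rw [Real.exp_le_one_iff]
        linarith
      calc Real.exp (-w) * v w ≤ 1 * v w := mul_le_mul_of_nonneg_right hexp1 hvw
        _ = v w := one_mul _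
  have hG_der : ∀ w ∈ Ici (0:ℝ),
      HasDerivAt (fun w => Real.exp (-w) * u w)
        (-(Real.exp (-w) * u w) - (c/ν) * (Real.exp (-w) * v w)) w := by
    intro w _
    have he : HasDerivAt (fun w : ℝ => Real.exp (-w)) (-Real.exp (-w)) w := by
      have := (Real.hasDerivAt_exp (-w)).comp w ((hasDerivAt_id w).neg)
      exact this.congr_deriv (by ring)
    have h := he.mul (hu_der w)
    refine h.congr_deriv ?_
    ring
  have hG'_int : IntegrableOn
      (fun w => -(Real.exp (-w) * u w) - (c/ν) * (Real.exp (-w) * v w)) (Ioi (0:ℝ)) :=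
    (hEu_int.neg).sub (hEv_int.const_mul _)
  have hG_lim : Tendsto (fun w => Real.exp (-w) * u w) atTop (𝓝 0) := by
    apply squeeze_zero_norm' _ Real.tendsto_exp_neg_atTop_nhds_zero
    filter_upwards [eventually_ge_atTop (0:ℝ)] with w hw
    have hb := hbounds w hw
    rw [Real.norm_eq_abs, abs_mul, abs_of_nonneg (Real.exp_pos _).le, abs_of_nonneg hb.1]
    calc Real.exp (-w) * u w ≤ Real.exp (-w) * 1 :=
          mul_le_mul_of_nonneg_left hb.2 (Real.exp_pos _).le
      _ = Real.exp (-w) := mul_one _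
  have hFTC := integral_Ioi_of_hasDerivAt_of_tendsto' hG_der hG'_int hG_lim
  have hu0 : Real.exp (-(0:ℝ)) * u 0 = 1 := by
    simp only [hu, neg_zero, Real.exp_zero, one_mul, mul_zero]
    exact ML_one_zero ν
  rw [hu0] at hFTC
  have h1int : IntegrableOn (fun w : ℝ => -(Real.exp (-w) * u w)) (Ioi (0:ℝ)) := hEu_int.neg
  have h2int : IntegrableOn (fun w : ℝ => c/ν * (Real.exp (-w) * v w)) (Ioi (0:ℝ)) :=
    hEv_int.const_mul _
  rw [integral_sub h1int h2int, integral_neg, MeasureTheory.integral_const_mul] at hFTC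
  have hIv : (∫ w in Ioi (0:ℝ), Real.exp (-w) * ML ν ν (-w * lam * t ^ ν))
      = ∫ w in Ioi (0:ℝ), Real.exp (-w) * v w := by
    apply integral_congr_ae
    apply ae_of_all
    intro w
    show Real.exp (-w) * ML ν ν (-w * lam * t ^ ν) = Real.exp (-w) * v w
    have : -w * lam * t ^ ν = -(c*w) := by rw [hc]; ring
    rw [this, hv]
  have hIu : (∫ w in Ioi (0:ℝ), Real.exp (-w) * ML ν 1 (-lam * t ^ ν * w))
      = ∫ w in Ioi (0:ℝ), Real.exp (-w) * u w := by
    apply integral_congr_ae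
    apply ae_of_all
    intro w
    show Real.exp (-w) * ML ν 1 (-lam * t ^ ν * w) = Real.exp (-w) * u w
    have : -lam * t ^ ν * w = -(c*w) := by rw [hc]; ring
    rw [this, hu]
  rw [hIv, hIu]
  linarith [hFTC]
end
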